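/- A univariate real polynomial that is nonnegative on all of ℝ is a sum of two squares of polynomials. -/
import Mathlib

open Polynomial

-- continuity limit lemma
lemma eval_nonneg_of_ne {h : Polynomial ℝ} {a : ℝ}
    (H : ∀ t, t ≠ a → 0 ≤ h.eval t) : 0 ≤ h.eval a := by
  have hc : Filter.Tendsto (fun t => h.eval t) (nhdsWithin a {a}ᶜ) (nhds (h.eval a)) :=
    (h.continuous.continuousAt).continuousWithinAt
  exact ge_of_tendsto hc (by filter_upwards [self_mem_nhdsWithin] with t ht using H t ht)

-- double root lemma
lemma sq_dvd_of_root {p : Polynomial ℝ} (hp : ∀ t, 0 ≤ p.eval t) {a : ℝ}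
    (ha : p.eval a = 0) : (X - C a) ^ 2 ∣ p := by
  obtain ⟨r, hr⟩ := (dvd_iff_isRoot).mpr (show IsRoot p a from ha)
  have hderiv : deriv (fun x => p.eval x) a = 0 := by
    apply IsLocalMin.deriv_eq_zero
    refine Filter.Eventually.of_forall fun x => ?_
    simpa [ha] using hp x
  rw [Polynomial.deriv] at hderiv
  have hra : r.eval a = 0 := by
    have := congrArg derivative hr
    rw [derivative_mul, derivative_sub, derivative_X, derivative_C, sub_zero, one_mul] at this
    have h2 := congrArg (fun q => Polynomial.eval a q) this
    simp at h2
    simpa [h2] using hderiv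
  obtain ⟨s, hs⟩ := (dvd_iff_isRoot).mpr (show IsRoot r a from hra)
  exact ⟨s, by rw [hr, hs]; ring⟩

-- positive quadratic is a sum of two squares
lemma quad_sum_sq {g : Polynomial ℝ} (h2 : g.natDegree = 2)
    (hg : ∀ t, 0 < g.eval t) : ∃ A B : Polynomial ℝ, g = A ^ 2 + B ^ 2 := by
  set a := g.coeff 2 with ha
  set b := g.coeff 1 with hb
  set c := g.coeff 0 with hc
  have heval : ∀ t : ℝ, g.eval t = c + b * t + a * t ^ 2 := by
    intro t
    rw [eval_eq_sum_range' (by omega : g.natDegree < 3)]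
    simp [Finset.sum_range_succ]
    try ring
  have hg0 : g ≠ 0 := fun h0 => by simp [h0] at h2
  have ha0 : a ≠ 0 := by
    show g.coeff 2 ≠ 0
    rw [← h2, g.coeff_natDegree]
    exact leadingCoeff_ne_zero.mpr hg0
  have hcpos : 0 < c := by simpa [heval] using hg 0
  have hapos : 0 < a := by
    rcases lt_or_gt_of_ne ha0 with hneg | hpos
    · exfalso
      set t := max 1 ((|b| + c + 1) / (-a)) with ht
      have ht1 : (1:ℝ) ≤ t := le_max_left _ _
      have ht2 : (|b| + c + 1) / (-a) ≤ t := le_max_right _ _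
      have hna : 0 < -a := by linarith
      have hat : a * t ≤ -( |b| + c + 1) := by
        rw [div_le_iff₀ hna] at ht2
        nlinarith
      have := hg t
      rw [heval] at this
      nlinarith [abs_nonneg b, le_abs_self b, neg_abs_le b]
    · exact hpos
  have hd : 0 < c - b ^ 2 / (4 * a) := by
    have := hg (-b / (2 * a))
    rw [heval] at this
    have h4a : (4 * a) ≠ 0 := by positivity
    field_simp at this ⊢
    nlinarith
  obtain ⟨u, hu0, hu2⟩ : ∃ u : ℝ, u ≠ 0 ∧ u ^ 2 = a :=
    ⟨Real.sqrt a, by positivity, Real.sq_sqrt hapos.le⟩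
  obtain ⟨e, he2⟩ : ∃ e : ℝ, e ^ 2 = c - b ^ 2 / (4 * a) :=
    ⟨Real.sqrt _, Real.sq_sqrt hd.le⟩
  refine ⟨C u * X + C (b / (2 * u)), C e, ?_⟩
  apply Polynomial.funext
  intro t
  simp only [eval_add, eval_pow, eval_mul, eval_C, eval_X, heval]
  rw [he2, ← hu2]
  field_simp
  ring

lemma main_aux : ∀ n : ℕ, ∀ p : Polynomial ℝ, p.natDegree = n →
    (∀ t : ℝ, 0 ≤ p.eval t) → ∃ q s : Polynomial ℝ, p = q ^ 2 + s ^ 2 := by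
  intro n
  induction n using Nat.strong_induction_on with
  | _ n ih =>
  intro p hn hp
  by_cases h0 : p = 0
  · exact ⟨0, 0, by simp [h0]⟩
  by_cases hu : IsUnit p
  · obtain ⟨c, -, hc⟩ := Polynomial.isUnit_iff.mp hu
    have hc0 : 0 ≤ c := by have := hp 0; rw [← hc] at this; simpa using this
    exact ⟨C (Real.sqrt c), 0, by
      rw [← hc]
      simp [← C_pow, Real.sq_sqrt hc0]⟩
  obtain ⟨g, hgi, hgd⟩ := WfDvdMonoid.exists_irreducible_factor hu h0
  by_cases hroot : ∃ a : ℝ, p.eval a = 0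
  · obtain ⟨a, ha⟩ := hroot
    obtain ⟨h1, hh1⟩ := sq_dvd_of_root hp ha
    have key : ∀ t, t ≠ a → 0 ≤ h1.eval t := by
      intro t ht
      have h2 := hp t
      rw [hh1] at h2
      simp only [eval_mul, eval_pow, eval_sub, eval_X, eval_C] at h2
      have hta : t - a ≠ 0 := sub_ne_zero.mpr ht
      have h3 : 0 < (t - a) ^ 2 := by positivity
      nlinarith
    have hh1nonneg : ∀ t, 0 ≤ h1.eval t := by
      intro t
      by_cases hta : t = a
      · subst hta; exact eval_nonneg_of_ne key
      · exact key t hta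
    have h1ne : h1 ≠ 0 := by
      intro hz; rw [hz, mul_zero] at hh1; exact h0 hh1
    have hXne : ((X : Polynomial ℝ) - C a) ^ 2 ≠ 0 := by
      apply pow_ne_zero; exact X_sub_C_ne_zero a
    have hdeg : p.natDegree = 2 + h1.natDegree := by
      rw [hh1, natDegree_mul hXne h1ne, natDegree_pow, natDegree_X_sub_C]
    obtain ⟨q, s, hqs⟩ := ih h1.natDegree (by omega) h1 rfl hh1nonneg
    exact ⟨(X - C a) * q, (X - C a) * s, by rw [hh1, hqs]; ring⟩
  · push_neg at hroot
    have hppos : ∀ t, 0 < p.eval t := fun t => lt_of_le_of_ne (hp t) (Ne.symm (hroot t))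
    obtain ⟨h, hgh⟩ := hgd
    have hgne : ∀ t, g.eval t ≠ 0 := by
      intro t hgt
      exact hroot t (by rw [hgh, eval_mul, hgt, zero_mul])
    have hsign : (∀ t, 0 < g.eval t) ∨ (∀ t, g.eval t < 0) := by
      by_contra hcon
      push_neg at hcon
      obtain ⟨⟨t₁, ht₁⟩, ⟨t₂, ht₂⟩⟩ := hcon
      have h1 : g.eval t₁ < 0 := lt_of_le_of_ne ht₁ (hgne t₁)
      have h2 : 0 < g.eval t₂ := lt_of_le_of_ne ht₂ (Ne.symm (hgne t₂))
      have hiv := intermediate_value_uIcc (f := fun x => g.eval x) (a := t₁) (b := t₂)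
        (g.continuous.continuousOn)
      have h0mem : (0:ℝ) ∈ Set.uIcc (g.eval t₁) (g.eval t₂) :=
        Set.mem_uIcc.mpr (Or.inl ⟨h1.le, h2.le⟩)
      obtain ⟨x, -, hx⟩ := hiv h0mem
      exact hgne x hx
    -- normalize sign
    obtain ⟨g', h', hgh', hg'pos⟩ : ∃ g' h' : Polynomial ℝ,
        p = g' * h' ∧ (∀ t, 0 < g'.eval t) ∧ g'.natDegree = g.natDegree := by
      rcases hsign with hpos | hneg
      · exact ⟨g, h, hgh, hpos, rfl⟩
      · exact ⟨-g, -h, by rw [hgh]; ring, fun t => by simpa using hneg t,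
          by simp⟩
    obtain ⟨hg'pos, hg'deg⟩ := hg'pos
    have hg'ne : g' ≠ 0 := fun hz => by simpa [hz] using hg'pos 0
    have hh'nonneg : ∀ t, 0 ≤ h'.eval t := by
      intro t
      have := hppos t
      rw [hgh', eval_mul] at this
      nlinarith [hg'pos t]
    have hh'ne : h' ≠ 0 := by
      intro hz; rw [hz, mul_zero] at hgh'; exact h0 hgh'
    have hgd2 : g.natDegree = 2 := by
      have hle : g.natDegree ≤ 2 := hgi.natDegree_le_two
      have hgne0 : g ≠ 0 := hgi.ne_zero
      have h1' : g.natDegree ≠ 0 := by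
        intro hdz
        have := Polynomial.eq_C_of_natDegree_eq_zero hdz
        exact hgi.not_isUnit (this ▸ isUnit_C.mpr
          (isUnit_iff_ne_zero.mpr (by
            intro hc0
            apply hgne0
            rw [this, hc0, map_zero])))
      have h2' : g.natDegree ≠ 1 := by
        intro hd1
        have hc1 : g.coeff 1 ≠ 0 := by
          rw [← hd1, g.coeff_natDegree]
          exact leadingCoeff_ne_zero.mpr hgne0
        apply hgne (-(g.coeff 0) / g.coeff 1)
        rw [eval_eq_sum_range' (by omega : g.natDegree < 2)]
        simp [Finset.sum_range_succ]
        field_simp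
        ring
      omega
    have hg'd2 : g'.natDegree = 2 := by rw [hg'deg, hgd2]
    obtain ⟨A, B, hAB⟩ := quad_sum_sq hg'd2 hg'pos
    have hdeg : p.natDegree = 2 + h'.natDegree := by
      rw [hgh', natDegree_mul hg'ne hh'ne, hg'd2]
    obtain ⟨q, s, hqs⟩ := ih h'.natDegree (by omega) h' rfl hh'nonneg
    exact ⟨A * q - B * s, A * s + B * q, by rw [hgh', hAB, hqs]; ring⟩

/-- A univariate real polynomial that is nonnegative on `ℝ` is a sum of two squares. -/
theorem nonneg_poly_sum_two_squares (p : Polynomial ℝ) (hp : ∀ t : ℝ, 0 ≤ p.eval t) :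
    ∃ q s : Polynomial ℝ, p = q ^ 2 + s ^ 2 :=
  main_aux p.natDegree p rfl hp
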